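/- In the ring R = ℚ[c₁,c₂,d₂]/I (with I generated by c₁⁴ + 3c₂² − 9c₂d₂ − 3d₂², c₁²c₂ − c₂d₂ − 3d₂², c₁²d₂ − 3d₂², 9c₁c₂² − 14c₁c₂d₂, 3c₁d₂² − 2c₁c₂d₂), the identity 2·c₁⁶ = 57·d₂³ holds. (Since d₂³ equals twice the point class, this recovers that the degree of Y is 57.) -/
import Mathlib

open MvPolynomial

noncomputable section

abbrev c1 : MvPolynomial (Fin 3) ℚ := X 0
abbrev c2 : MvPolynomial (Fin 3) ℚ := X 1
abbrev d2 : MvPolynomial (Fin 3) ℚ := X 2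

def chowIdeal : Ideal (MvPolynomial (Fin 3) ℚ) :=
  Ideal.span {c1 ^ 4 + 3 * c2 ^ 2 - 9 * c2 * d2 - 3 * d2 ^ 2,
    c1 ^ 2 * c2 - c2 * d2 - 3 * d2 ^ 2,
    c1 ^ 2 * d2 - 3 * d2 ^ 2,
    9 * c1 * c2 ^ 2 - 14 * c1 * c2 * d2,
    3 * c1 * d2 ^ 2 - 2 * c1 * c2 * d2}

/-- In `R = ℚ[c₁,c₂,d₂]/I`, the identity `2c₁⁶ = 57d₂³` holds: the degree of `Y`
is 57. -/
theorem degree_of_Y :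
    Ideal.Quotient.mk chowIdeal (2 * c1 ^ 6) =
      Ideal.Quotient.mk chowIdeal (57 * d2 ^ 3) := by
  rw [Ideal.Quotient.eq]
  have h1 : (c1 ^ 4 + 3 * c2 ^ 2 - 9 * c2 * d2 - 3 * d2 ^ 2) ∈ chowIdeal :=
    Ideal.subset_span (by simp)
  have h2 : (c1 ^ 2 * c2 - c2 * d2 - 3 * d2 ^ 2) ∈ chowIdeal :=
    Ideal.subset_span (by simp)
  have h3 : (c1 ^ 2 * d2 - 3 * d2 ^ 2) ∈ chowIdeal :=
    Ideal.subset_span (by simp)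
  have key : 2 * c1 ^ 6 - 57 * d2 ^ 3 =
      (2 * c1 ^ 2 - 2 * d2) * (c1 ^ 4 + 3 * c2 ^ 2 - 9 * c2 * d2 - 3 * d2 ^ 2)
      + (-6 * c2 + 9 * d2) * (c1 ^ 2 * c2 - c2 * d2 - 3 * d2 ^ 2)
      + (2 * c1 ^ 2 + 9 * c2 + 12 * d2) * (c1 ^ 2 * d2 - 3 * d2 ^ 2) := by
    ring
  rw [key]
  exact add_mem (add_mem (Ideal.mul_mem_left _ _ h1) (Ideal.mul_mem_left _ _ h2))
    (Ideal.mul_mem_left _ _ h3)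

end
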